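/- Let G = (V, E) be a finite weighted graph with real symmetric edge weights w_uv, partitioned into disjoint vertex subsets V_1, …, V_k covering V, and fix local spin assignments z^{(i)} : V_i → {−1, +1}. For polarities s ∈ {−1, +1}^k, define the merged assignment z(s) by z(s)_u = s_i · z^{(i)}_u for u ∈ V_i. Then there exists a constant K (independent of s) such that for all s, Cut(z(s)) = K + (1/2) Σ_{1 ≤ i < j ≤ k} w'_{ij} (1 − s_i s_j), where w'_{ij} = Σ_{u ∈ V_i, v ∈ V_j, (u,v)∈E} w_uv z^{(i)}_u z^{(j)}_v. Consequently, maximizing Cut(z(s)) over s is exactly a MaxCut problem on a reduced graph with k nodes and edge weights w'_{ij}. -/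
import Mathlib

lemma inner_count {k : ℕ} (a b : Fin k) (c : ℝ) (hab : a ≠ b) :
    ∑ i : Fin k, ∑ j ∈ Finset.Ioi i,
      (if (a = i ∧ b = j) ∨ (a = j ∧ b = i) then c else 0) = c := by
  rcases hab.lt_or_gt with h | h
  · rw [Finset.sum_eq_single a]
    · rw [Finset.sum_eq_single_of_mem b (Finset.mem_Ioi.mpr h)]
      · simp
      · intro j hj hjb
        refine if_neg ?_
        rintro (⟨h1, h2⟩ | ⟨h1, h2⟩)
        · exact hjb h2.symm
        · have := Finset.mem_Ioi.mp hj; subst h1 h2; exact absurd this (lt_asymm h)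
    · intro i _ hia
      refine Finset.sum_eq_zero fun j hj => if_neg ?_
      have hij := Finset.mem_Ioi.mp hj
      rintro (⟨h1, h2⟩ | ⟨h1, h2⟩)
      · exact hia h1.symm
      · subst h1 h2; exact absurd hij (lt_asymm h)
    · simp
  · rw [Finset.sum_eq_single b]
    · rw [Finset.sum_eq_single_of_mem a (Finset.mem_Ioi.mpr h)]
      · simp
      · intro j hj hja
        refine if_neg ?_
        rintro (⟨h1, h2⟩ | ⟨h1, h2⟩)
        · have := Finset.mem_Ioi.mp hj; subst h1 h2; exact absurd this (lt_asymm h)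
        · exact hja h1.symm
    · intro i _ hib
      refine Finset.sum_eq_zero fun j hj => if_neg ?_
      have hij := Finset.mem_Ioi.mp hj
      rintro (⟨h1, h2⟩ | ⟨h1, h2⟩)
      · subst h1 h2; exact absurd hij (lt_asymm h)
      · exact hib h2.symm
    · simp

lemma reindex {V : Type*} (E : Finset (V × V)) (k : ℕ) (P : V → Fin k)
    (f : V × V → ℝ) :
    ∑ i : Fin k, ∑ j ∈ Finset.Ioi i,
      ∑ e ∈ E.filter (fun e => (P e.1 = i ∧ P e.2 = j) ∨ (P e.1 = j ∧ P e.2 = i)), f e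
    = ∑ e ∈ E.filter (fun e => ¬ P e.1 = P e.2), f e := by
  simp_rw [Finset.sum_filter]
  rw [Finset.sum_congr rfl fun i (_ : i ∈ Finset.univ) =>
    (Finset.sum_comm : (∑ j ∈ Finset.Ioi i, ∑ e ∈ E,
      (if P e.1 = i ∧ P e.2 = j ∨ P e.1 = j ∧ P e.2 = i then f e else 0)) = _),
    Finset.sum_comm]
  refine Finset.sum_congr rfl fun e _ => ?_
  by_cases hab : P e.1 = P e.2
  · rw [if_neg (by simpa using hab)]
    refine Finset.sum_eq_zero fun i _ => Finset.sum_eq_zero fun j hj => if_neg ?_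
    have hij := Finset.mem_Ioi.mp hj
    rintro (⟨h1, h2⟩ | ⟨h1, h2⟩) <;>
      · rw [h1, h2] at hab; exact absurd hab (by intro hc; exact absurd hij (by simp [hc]))
  · rw [if_pos hab]
    exact inner_count (P e.1) (P e.2) (f e) hab


/-- The cut value of a spin assignment `z : V → ℝ` (with values in `{-1, +1}`):
`Cut(z) = (1/2) ∑_{(u,v) ∈ E} w_uv (1 - z_u z_v)`. -/
noncomputable def cutValue {V : Type*} (E : Finset (V × V)) (w : V × V → ℝ)
    (z : V → ℝ) : ℝ :=
  (1 / 2) * ∑ e ∈ E, w e * (1 - z e.1 * z e.2)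

/-- QAOA² merging step. Partition the vertices of a finite weighted
graph into `k` blocks via `P : V → Fin k`, and fix local spin assignments `zloc`.
For polarities `s ∈ {−1, +1}^k`, the merged assignment `z(s)_u = s_{P u} · zloc_u`
has cut value `K + (1/2) ∑_{i<j} w'_{ij} (1 − s_i s_j)` for a constant `K`
independent of `s`, where `w'_{ij} = ∑_{u ∈ V_i, v ∈ V_j, (u,v) ∈ E} w_uv zloc_u zloc_v`.
Hence merging is exactly a MaxCut problem on a reduced `k`-node graph. -/
theorem stmt_12 {V : Type*} [Fintype V] (E : Finset (V × V)) (w : V × V → ℝ)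
    (hsym : ∀ u v : V, w (u, v) = w (v, u))
    (k : ℕ) (P : V → Fin k)
    (zloc : V → ℝ) (hzloc : ∀ u, zloc u = 1 ∨ zloc u = -1) :
    ∃ K : ℝ, ∀ s : Fin k → ℝ, (∀ i, s i = 1 ∨ s i = -1) →
      cutValue E w (fun u => s (P u) * zloc u) =
        K + (1 / 2) * ∑ i : Fin k, ∑ j ∈ Finset.Ioi i,
          (∑ e ∈ E.filter
              (fun e => (P e.1 = i ∧ P e.2 = j) ∨ (P e.1 = j ∧ P e.2 = i)),
            w e * zloc e.1 * zloc e.2) * (1 - s i * s j) := by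
  refine ⟨(1 / 2) * ∑ e ∈ E.filter (fun e => P e.1 = P e.2),
      w e * (1 - zloc e.1 * zloc e.2)
    + (1 / 2) * ∑ e ∈ E.filter (fun e => ¬ P e.1 = P e.2),
      (w e - w e * zloc e.1 * zloc e.2), fun s hs => ?_⟩
  have hs1 : ∀ i, s i * s i = 1 := by
    intro i; rcases hs i with h | h <;> rw [h] <;> ring
  -- rewrite the double sum on the RHS
  have key : (∑ i : Fin k, ∑ j ∈ Finset.Ioi i,
        (∑ e ∈ E.filter
            (fun e => (P e.1 = i ∧ P e.2 = j) ∨ (P e.1 = j ∧ P e.2 = i)),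
          w e * zloc e.1 * zloc e.2) * (1 - s i * s j))
      = ∑ e ∈ E.filter (fun e => ¬ P e.1 = P e.2),
          w e * zloc e.1 * zloc e.2 * (1 - s (P e.1) * s (P e.2)) := by
    rw [← reindex E k P (fun e => w e * zloc e.1 * zloc e.2 * (1 - s (P e.1) * s (P e.2)))]
    refine Finset.sum_congr rfl fun i _ => Finset.sum_congr rfl fun j _ => ?_
    rw [Finset.sum_mul]
    refine Finset.sum_congr rfl fun e he => ?_
    rcases (Finset.mem_filter.mp he).2 with ⟨h1, h2⟩ | ⟨h1, h2⟩ <;> rw [h1, h2] <;> ring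
  rw [key]
  unfold cutValue
  rw [← Finset.sum_filter_add_sum_filter_not E (fun e => P e.1 = P e.2)]
  have hsame : ∑ e ∈ E.filter (fun e => P e.1 = P e.2),
      w e * (1 - s (P e.1) * zloc e.1 * (s (P e.2) * zloc e.2))
    = ∑ e ∈ E.filter (fun e => P e.1 = P e.2), w e * (1 - zloc e.1 * zloc e.2) := by
    refine Finset.sum_congr rfl fun e he => ?_
    have h := (Finset.mem_filter.mp he).2
    rw [h]
    linear_combination (-(w e * zloc e.1 * zloc e.2)) * hs1 (P e.2)
  have hdiff : ∑ e ∈ E.filter (fun e => ¬ P e.1 = P e.2),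
      w e * (1 - s (P e.1) * zloc e.1 * (s (P e.2) * zloc e.2))
    = ∑ e ∈ E.filter (fun e => ¬ P e.1 = P e.2),
      ((w e - w e * zloc e.1 * zloc e.2)
        + w e * zloc e.1 * zloc e.2 * (1 - s (P e.1) * s (P e.2))) := by
    refine Finset.sum_congr rfl fun e _ => by ring
  simp only [hsame, hdiff, Finset.sum_add_distrib]
  ring
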